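/- Let T be a tree and let G be a subgroup of Aut(T). Let G^+ denote the subgroup of G generated by all arc stabilizers G_{(x,y)} = {g ∈ G : g x = x and g y = y}, where (x,y) ranges over arcs of T. Then (G^{P_1})^+ = (G^+)^{P_1}: the subgroup of the P_1-closure of G generated by its arc stabilizers equals the P_1-closure of G^+. -/

import Mathlib

open SimpleGraph

variable {V : Type*}

/-- The automorphism group of a simple graph `T`, as a subgroup of `Equiv.Perm V`. -/
def SimpleGraph.autGroup (T : SimpleGraph V) : Subgroup (Equiv.Perm V) where
  carrier := {g : Equiv.Perm V | ∀ u v : V, T.Adj (g u) (g v) ↔ T.Adj u v}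
  one_mem' := by intro u v; simp
  mul_mem' := by
    intro a b ha hb u v
    simpa using (ha (b u) (b v)).trans (hb u v)
  inv_mem' := by
    intro a ha u v
    simpa using (ha (a⁻¹ u) (a⁻¹ v)).symm

/-- The `P_k`-closure of a set `G` of automorphisms of `T`: all automorphisms `g` such that
for every vertex `v` and every finite set `X` of vertices at distance at most `k` from `v`,
some element of `G` agrees with `g` on `X`. -/
def pClosure (T : SimpleGraph V) (k : ℕ) (G : Set ↥(T.autGroup)) : Set ↥(T.autGroup) :=
  {g | ∀ (v : V) (X : Finset V), (∀ x ∈ X, T.dist v x ≤ k) →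
    ∃ h ∈ G, ∀ x ∈ X, g.val x = h.val x}


/-- For a set `S` of automorphisms of `T`, the subgroup generated by all arc stabilizers:
elements of `S` fixing both endpoints of some arc of `T`. -/
def plusSet (T : SimpleGraph V) (S : Set ↥(T.autGroup)) : Subgroup ↥(T.autGroup) :=
  Subgroup.closure {g : ↥(T.autGroup) | g ∈ S ∧ ∃ x y : V, T.Adj x y ∧ g.val x = x ∧ g.val y = y}

-- helper lemmas
lemma dist_le_one_iff' {T : SimpleGraph V} (hc : T.Connected) {u w : V} :
    T.dist u w ≤ 1 ↔ u = w ∨ T.Adj u w := by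
  constructor
  · intro h
    interval_cases hd : T.dist u w
    · exact Or.inl (hc.dist_eq_zero_iff.mp hd)
    · exact Or.inr (dist_eq_one_iff_adj.mp hd)
  · rintro (rfl | h)
    · simp [SimpleGraph.dist_self]
    · exact le_of_eq (dist_eq_one_iff_adj.mpr h)

lemma dist_le_one_map {T : SimpleGraph V} (hc : T.Connected) (g : ↥T.autGroup) {u w : V}
    (h : T.dist u w ≤ 1) : T.dist (g.val u) (g.val w) ≤ 1 := by
  rcases (dist_le_one_iff' hc).mp h with rfl | h
  · simp [SimpleGraph.dist_self]
  · exact (dist_le_one_iff' hc).mpr (Or.inr ((g.2 u w).mpr h))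

/-- pClosure of a subgroup is a subgroup. -/
def pClosureSubgroup (T : SimpleGraph V) (hc : T.Connected) (H : Subgroup ↥T.autGroup) :
    Subgroup ↥T.autGroup where
  carrier := pClosure T 1 (H : Set ↥T.autGroup)
  one_mem' := by
    intro v X hX
    exact ⟨1, one_mem H, fun x hx => rfl⟩
  mul_mem' := by
    classical
    intro a b ha hb v X hX
    obtain ⟨h2, hh2, hb2⟩ := hb v X hX
    obtain ⟨h1, hh1, ha1⟩ := ha (b.val v) (X.image b.val) (by
      intro x hx
      obtain ⟨x0, hx0, rfl⟩ := Finset.mem_image.mp hx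
      exact dist_le_one_map hc b (hX x0 hx0))
    refine ⟨h1 * h2, mul_mem hh1 hh2, fun x hx => ?_⟩
    have h1b : a.val (b.val x) = h1.val (b.val x) :=
      ha1 (b.val x) (Finset.mem_image_of_mem _ hx)
    simp only [Subgroup.coe_mul, Equiv.Perm.mul_apply]
    rw [← hb2 x hx, h1b]
  inv_mem' := by
    classical
    intro g hg v X hX
    obtain ⟨h, hh, hagr⟩ := hg (g⁻¹.val v) (X.image g⁻¹.val) (by
      intro x hx
      obtain ⟨x0, hx0, rfl⟩ := Finset.mem_image.mp hx
      exact dist_le_one_map hc g⁻¹ (hX x0 hx0))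
    refine ⟨h⁻¹, inv_mem hh, fun x hx => ?_⟩
    have := hagr (g⁻¹.val x) (Finset.mem_image_of_mem _ hx)
    simp only [Subgroup.coe_inv] at this ⊢
    rw [Equiv.Perm.coe_inv, Equiv.apply_symm_apply] at this
    conv_rhs => rw [this]
    rw [Equiv.Perm.coe_inv, Equiv.Perm.coe_inv h.val, Equiv.symm_apply_apply]

lemma pClosure_mono {T : SimpleGraph V} {k : ℕ} {S S' : Set ↥T.autGroup} (h : S ⊆ S') :
    pClosure T k S ⊆ pClosure T k S' := by
  intro g hg v X hX
  obtain ⟨h', hh', ha⟩ := hg v X hX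
  exact ⟨h', h hh', ha⟩

lemma subset_pClosure {T : SimpleGraph V} {k : ℕ} {S : Set ↥T.autGroup} :
    S ⊆ pClosure T k S :=
  fun g hg v X hX => ⟨g, hg, fun x _ => rfl⟩

lemma plusSet_le {T : SimpleGraph V} (H : Subgroup ↥T.autGroup) :
    plusSet T (H : Set ↥T.autGroup) ≤ H :=
  (Subgroup.closure_le _).mpr (fun g hg => hg.1)

lemma plusSet_mono {T : SimpleGraph V} {S S' : Set ↥T.autGroup} (h : S ⊆ S') :
    plusSet T S ≤ plusSet T S' :=
  Subgroup.closure_mono (fun g hg => ⟨h hg.1, hg.2⟩)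

/-- Base case: if `g` in the P1-closure of `G` fixes the arc `(x,y)`, then on any finite
subset of the ball of radius 1 around `x`, `g` agrees with an element of `G` fixing `(x,y)`. -/
lemma base_lemma {T : SimpleGraph V} (G : Subgroup ↥T.autGroup)
    {g : ↥T.autGroup} (hg : g ∈ pClosure T 1 (G : Set ↥T.autGroup))
    {x y : V} (hxy : T.Adj x y) (hgx : g.val x = x) (hgy : g.val y = y)
    (X : Finset V) (hX : ∀ a ∈ X, T.dist x a ≤ 1) :
    ∃ k ∈ plusSet T (G : Set ↥T.autGroup), ∀ a ∈ X, g.val a = k.val a := by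
  classical
  obtain ⟨k, hkG, hk⟩ := hg x (insert x (insert y X)) (by
    intro a ha
    rcases Finset.mem_insert.mp ha with rfl | ha
    · simp [SimpleGraph.dist_self]
    rcases Finset.mem_insert.mp ha with rfl | ha
    · exact le_of_eq (dist_eq_one_iff_adj.mpr hxy)
    · exact hX a ha)
  have hkx : k.val x = x := by
    rw [← hk x (Finset.mem_insert_self _ _), hgx]
  have hky : k.val y = y := by
    rw [← hk y (Finset.mem_insert.mpr (Or.inr (Finset.mem_insert_self _ _))), hgy]
  refine ⟨k, Subgroup.subset_closure ⟨hkG, x, y, hxy, hkx, hky⟩, fun a ha => ?_⟩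
  exact hk a (Finset.mem_insert.mpr (Or.inr (Finset.mem_insert.mpr (Or.inr ha))))

lemma gen_lemma {T : SimpleGraph V} (hc : T.Connected) (G : Subgroup ↥T.autGroup) :
    ∀ n : ℕ, ∀ g ∈ pClosure T 1 (G : Set ↥T.autGroup), ∀ x y v : V, T.Adj x y →
    g.val x = x → g.val y = y → T.dist v x = n →
    ∀ X : Finset V, (∀ a ∈ X, T.dist v a ≤ 1) →
    ∃ h ∈ plusSet T (G : Set ↥T.autGroup), ∀ a ∈ X, g.val a = h.val a := by
  classical
  intro n
  induction n with
  | zero =>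
    intro g hg x y v hxy hgx hgy hvx X hX
    have hvx' : v = x := hc.dist_eq_zero_iff.mp hvx
    subst hvx'
    exact base_lemma G hg hxy hgx hgy X hX
  | succ n ih =>
    intro g hg x y v hxy hgx hgy hvx X hX
    obtain ⟨p, hp⟩ := (hc v x).exists_walk_length_eq_dist
    cases p with
    | nil => rw [hvx] at hp; simp at hp
    | @cons _ w _ hadj q =>
      have hq : q.length + 1 = n + 1 := by
        simpa [hvx] using hp
      have hwx : T.dist w x = n := by
        have h1 : T.dist w x ≤ n := by
          have := SimpleGraph.dist_le q; omega
        have h2 : T.dist v x ≤ T.dist v w + T.dist w x := hc.dist_triangle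
        have h3 : T.dist v w ≤ 1 := le_of_eq (dist_eq_one_iff_adj.mpr hadj)
        omega
      obtain ⟨h1, hh1, hagr⟩ := ih g hg x y w hxy hgx hgy hwx {v, w} (by
        intro a ha
        rcases Finset.mem_insert.mp ha with rfl | ha
        · exact le_of_eq (dist_eq_one_iff_adj.mpr (T.adj_symm hadj))
        · rw [Finset.mem_singleton.mp ha]
          simp [SimpleGraph.dist_self])
      have hh1G : h1 ∈ G := plusSet_le G hh1
      have hg2cl : h1⁻¹ * g ∈ pClosureSubgroup T hc G :=
        mul_mem (inv_mem (subset_pClosure (SetLike.mem_coe.mpr hh1G)))  hg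
      have hgv : g.val v = h1.val v := hagr v (Finset.mem_insert_self _ _)
      have hgw : g.val w = h1.val w :=
        hagr w (Finset.mem_insert.mpr (Or.inr (Finset.mem_singleton_self _)))
      have hfv : (h1⁻¹ * g).val v = v := by
        simp [Subgroup.coe_mul, Subgroup.coe_inv, Equiv.Perm.mul_apply, hgv]
      have hfw : (h1⁻¹ * g).val w = w := by
        simp [Subgroup.coe_mul, Subgroup.coe_inv, Equiv.Perm.mul_apply, hgw]
      obtain ⟨k, hk, hkagr⟩ := base_lemma G hg2cl hadj hfv hfw X hX
      refine ⟨h1 * k, mul_mem hh1 hk, fun a ha => ?_⟩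
      have := hkagr a ha
      simp only [Subgroup.coe_mul, Subgroup.coe_inv, Equiv.Perm.mul_apply] at this ⊢
      rw [← this, Equiv.Perm.coe_inv, Equiv.apply_symm_apply]


/-- Proposition: `(G^{P_1})^+ = (G^+)^{P_1}`. -/
theorem plus_pClosure_comm
    (T : SimpleGraph V) (hT : T.IsTree) (G : Subgroup ↥(T.autGroup)) :
    (plusSet T (pClosure T 1 (G : Set ↥(T.autGroup))) : Set ↥(T.autGroup)) =
      pClosure T 1 ((plusSet T (G : Set ↥(T.autGroup)) : Subgroup ↥(T.autGroup)) :
        Set ↥(T.autGroup)) := by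
  have hc : T.Connected := hT.isConnected
  apply Set.Subset.antisymm
  · have hle : plusSet T (pClosure T 1 (G : Set ↥(T.autGroup))) ≤
        pClosureSubgroup T hc (plusSet T (G : Set ↥(T.autGroup))) := by
      apply (Subgroup.closure_le _).mpr
      rintro g ⟨hgcl, x, y, hxy, hgx, hgy⟩
      show g ∈ pClosure T 1 _
      intro v X hX
      exact gen_lemma hc G (T.dist v x) g hgcl x y v hxy hgx hgy rfl X hX
    exact fun g hg => hle hg
  · classical
    intro g hg
    obtain ⟨v0⟩ := hc.nonempty
    by_cases hex : ∃ w, T.Adj v0 w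
    · obtain ⟨w, hvw⟩ := hex
      obtain ⟨h, hhmem, hagree⟩ := hg v0 {v0, w} (by
        intro a ha
        rcases Finset.mem_insert.mp ha with rfl | ha
        · simp [SimpleGraph.dist_self]
        · rw [Finset.mem_singleton.mp ha]
          exact le_of_eq (dist_eq_one_iff_adj.mpr hvw))
      have hGsub : (plusSet T (G : Set ↥T.autGroup) : Set ↥T.autGroup) ⊆
          (G : Set ↥T.autGroup) := fun a ha => plusSet_le G ha
      have hgclG : g ∈ pClosure T 1 (G : Set ↥T.autGroup) := pClosure_mono hGsub hg
      have hhcl : h ∈ pClosure T 1 (G : Set ↥T.autGroup) := subset_pClosure (hGsub hhmem)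
      have hdcl : h⁻¹ * g ∈ pClosureSubgroup T hc G := mul_mem (inv_mem hhcl) hgclG
      have hgv : g.val v0 = h.val v0 := hagree v0 (Finset.mem_insert_self _ _)
      have hgw : g.val w = h.val w :=
        hagree w (Finset.mem_insert.mpr (Or.inr (Finset.mem_singleton_self _)))
      have hdv : (h⁻¹ * g).val v0 = v0 := by
        simp [Subgroup.coe_mul, Subgroup.coe_inv, Equiv.Perm.mul_apply, hgv]
      have hdw : (h⁻¹ * g).val w = w := by
        simp [Subgroup.coe_mul, Subgroup.coe_inv, Equiv.Perm.mul_apply, hgw]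
      have hdgen : h⁻¹ * g ∈ plusSet T (pClosure T 1 (G : Set ↥T.autGroup)) :=
        Subgroup.subset_closure ⟨hdcl, v0, w, hvw, hdv, hdw⟩
      have hhmem' : h ∈ plusSet T (pClosure T 1 (G : Set ↥T.autGroup)) :=
        plusSet_mono subset_pClosure hhmem
      have hgeq : g = h * (h⁻¹ * g) := by group
      rw [hgeq]
      exact SetLike.mem_coe.mpr (mul_mem hhmem' hdgen)
    · push_neg at hex
      have hall : ∀ u : V, u = v0 := by
        intro u
        obtain ⟨p⟩ := hc.preconnected v0 u
        cases p with
        | nil => rfl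
        | cons hadj q => exact absurd hadj (hex _)
      have hg1 : g = 1 := by
        apply Subtype.ext
        apply Equiv.ext
        intro u
        rw [hall (g.val u), hall u]
        rfl
      rw [hg1]
      exact SetLike.mem_coe.mpr (one_mem _)
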